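/- Let A be a unital C*-algebra and x₁, …, x_k ∈ A. If the unital C*-subalgebra C*₁(x₁, …, x_k) generated by x₁, …, x_k together with the unit of A is n-homogeneous for some n > 1, then C*₁(x₁, …, x_k) = C*(x₁, …, x_k), the C*-subalgebra generated by x₁, …, x_k alone. -/

import Mathlib

noncomputable section

universe u

instance : Inner ℂ (ULift.{u} ℂ) := ⟨fun x y => inner ℂ x.down y.down⟩

instance : InnerProductSpace ℂ (ULift.{u} ℂ) where
  norm_sq_eq_re_inner x := InnerProductSpace.norm_sq_eq_re_inner (𝕜 := ℂ) x.down
  conj_inner_symm x y := inner_conj_symm (𝕜 := ℂ) x.down y.down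
  add_left x y z := inner_add_left (𝕜 := ℂ) x.down y.down z.down
  smul_left x y r := inner_smul_left x.down y.down r

theorem isClosed_sup_span {E : Type*} [NormedAddCommGroup E] [NormedSpace ℂ E]
    [CompleteSpace E]
    {W : Submodule ℂ E} (hW : IsClosed (W : Set E)) (v : E) :
    IsClosed ((W ⊔ Submodule.span ℂ {v} : Submodule ℂ E) : Set E) := by
  haveI : IsClosed (W : Set E) := hW
  have hcont : Continuous W.mkQ :=
    AddMonoidHomClass.continuous_of_bound W.mkQ 1 fun m => by
      simpa using Submodule.Quotient.norm_mk_le W m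
  have key : W ⊔ Submodule.span ℂ {v}
      = (Submodule.span ℂ {W.mkQ v}).comap W.mkQ := by
    rw [← Set.image_singleton, ← Submodule.map_span, Submodule.comap_map_eq,
      Submodule.ker_mkQ, sup_comm]
  rw [key]
  have : IsClosed ((Submodule.span ℂ {W.mkQ v}) : Set (E ⧸ W)) :=
    Submodule.closed_of_finiteDimensional _
  exact this.preimage hcont

/-- A C*-algebra `A` is `n`-homogeneous if every nonzero irreducible representation of `A`
(on a Hilbert space) acts on an `n`-dimensional Hilbert space. -/
def IsNHomogeneous (n : ℕ) (A : Type u) [NonUnitalNonAssocSemiring A] [Module ℂ A] [Star A] :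
    Prop :=
  ∀ (H : Type u) (_ : NormedAddCommGroup H) (_ : InnerProductSpace ℂ H) (_ : CompleteSpace H)
    (π : A →⋆ₙₐ[ℂ] (H →L[ℂ] H)),
    (∃ a, π a ≠ 0) →
    (∀ S : Submodule ℂ H, IsClosed (S : Set H) →
      (∀ (a : A), ∀ v ∈ S, π a v ∈ S) → S = ⊥ ∨ S = ⊤) →
    Module.finrank ℂ H = n

/-- Lemma 6.1: if the unital C*-subalgebra `C*₁(x₁, …, x_k)` generated by `x₁, …, x_k`
together with the unit of `A` is `n`-homogeneous for some `n > 1`, then it coincides with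
the (non-unital) C*-subalgebra `C*(x₁, …, x_k)` generated by `x₁, …, x_k` alone. -/
theorem unital_cstar_adjoin_eq_cstar_adjoin_of_isNHomogeneous
    {n : ℕ} (hn : 1 < n) (A : Type u) [CStarAlgebra A] {k : ℕ} (x : Fin k → A)
    (hhom : IsNHomogeneous n
      ((StarAlgebra.adjoin ℂ (Set.range x)).topologicalClosure : StarSubalgebra ℂ A)) :
    ((StarAlgebra.adjoin ℂ (Set.range x)).topologicalClosure : Set A)
      = closure ((NonUnitalStarAlgebra.adjoin ℂ (Set.range x) :
          NonUnitalStarSubalgebra ℂ A) : Set A) := by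
  classical
  set s : Set A := Set.range x with hs
  set Bs : StarSubalgebra ℂ A := (StarAlgebra.adjoin ℂ s).topologicalClosure with hBs
  set Ccl : NonUnitalStarSubalgebra ℂ A :=
    (NonUnitalStarAlgebra.adjoin ℂ s).topologicalClosure with hCcl
  have hRHS : closure ((NonUnitalStarAlgebra.adjoin ℂ s :
      NonUnitalStarSubalgebra ℂ A) : Set A) = (Ccl : Set A) := rfl
  rw [hRHS]
  -- C ⊆ B
  have hsub : (Ccl : Set A) ⊆ (Bs : Set A) := by
    have h₁ : ((NonUnitalStarAlgebra.adjoin ℂ s : NonUnitalStarSubalgebra ℂ A) : Set A)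
        ⊆ ((StarAlgebra.adjoin ℂ s : StarSubalgebra ℂ A) : Set A) := by
      have : NonUnitalStarAlgebra.adjoin ℂ s ≤
          ((StarAlgebra.adjoin ℂ s).toSubalgebra.toNonUnitalSubalgebra.toNonUnitalStarSubalgebra
            (fun a ha => (StarAlgebra.adjoin ℂ s).star_mem' ha)) :=
        NonUnitalStarAlgebra.adjoin_le (StarAlgebra.subset_adjoin ℂ s)
      exact fun a ha => this ha
    calc (Ccl : Set A) = closure _ := rfl
    _ ⊆ closure ((StarAlgebra.adjoin ℂ s : StarSubalgebra ℂ A) : Set A) := closure_mono h₁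
    _ = (Bs : Set A) := rfl
  -- the submodule C + ℂ·1
  set Vm : Submodule ℂ A :=
    Ccl.toNonUnitalSubalgebra.toSubmodule ⊔ Submodule.span ℂ {(1 : A)} with hVm
  have hVmem : ∀ a : A, a ∈ Vm ↔ ∃ c ∈ Ccl, ∃ z : ℂ, a = c + z • 1 := by
    intro a
    constructor
    · intro h
      rcases Submodule.mem_sup.mp h with ⟨c, hc, w, hw, rfl⟩
      rcases Submodule.mem_span_singleton.mp hw with ⟨z, rfl⟩
      exact ⟨c, hc, z, rfl⟩
    · rintro ⟨c, hc, z, rfl⟩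
      exact Submodule.mem_sup.mpr
        ⟨c, hc, z • 1, Submodule.mem_span_singleton.mpr ⟨z, rfl⟩, rfl⟩
  have hCclosed : IsClosed ((Ccl.toNonUnitalSubalgebra.toSubmodule : Submodule ℂ A) : Set A) :=
    (NonUnitalStarAlgebra.adjoin ℂ s).isClosed_topologicalClosure
  have hVclosed : IsClosed (Vm : Set A) := isClosed_sup_span hCclosed 1
  -- multiplicative closure of Vm
  have hmulV : ∀ a b : A, a ∈ Vm → b ∈ Vm → a * b ∈ Vm := by
    intro a b ha hb
    rcases (hVmem a).mp ha with ⟨c, hc, z, rfl⟩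
    rcases (hVmem b).mp hb with ⟨d, hd, w, rfl⟩
    refine (hVmem _).mpr ⟨c * d + w • c + z • d, ?_, z * w, ?_⟩
    · exact add_mem (add_mem (mul_mem hc hd) (SMulMemClass.smul_mem _ hc))
        (SMulMemClass.smul_mem _ hd)
    · simp only [mul_add, add_mul, smul_mul_assoc, mul_smul_comm, smul_smul,
        smul_add, one_mul, mul_one]
      module
  -- the unital star subalgebra with carrier Vm
  let U : StarSubalgebra ℂ A :=
    { Vm.toSubalgebra (Submodule.mem_sup_right (Submodule.mem_span_singleton_self 1)) hmulV with
      star_mem' := by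
        intro a ha
        rcases (hVmem a).mp ha with ⟨c, hc, z, rfl⟩
        refine (hVmem _).mpr ⟨star c, star_mem hc, star z, ?_⟩
        simp [star_add, star_smul] }
  have hBU : ∀ b : A, b ∈ Bs → b ∈ Vm := by
    have h1 : StarAlgebra.adjoin ℂ s ≤ U := by
      apply StarAlgebra.adjoin_le
      intro a ha
      have : a ∈ Ccl := (NonUnitalStarAlgebra.adjoin ℂ s).le_topologicalClosure
        (NonUnitalStarAlgebra.subset_adjoin ℂ s ha)
      exact Submodule.mem_sup_left this
    have h2 : Bs ≤ U := StarSubalgebra.topologicalClosure_minimal h1 hVclosed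
    exact fun b hb => h2 hb
  by_cases hone : (1 : A) ∈ Ccl
  · -- easy case: 1 ∈ C, so B ⊆ C
    refine subset_antisymm ?_ hsub
    intro b hb
    rcases (hVmem b).mp (hBU b hb) with ⟨c, hc, z, rfl⟩
    exact add_mem hc (SMulMemClass.smul_mem z hone)
  · exfalso
    -- the character φ
    have hdecomp : ∀ b : Bs, ∃ z : ℂ, ((b : A) - z • 1) ∈ Ccl := by
      intro b
      rcases (hVmem (b : A)).mp (hBU (b : A) b.2) with ⟨c, hc, z, hz⟩
      exact ⟨z, by rw [hz]; simpa using hc⟩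
    let φ : Bs → ℂ := fun b => Classical.choose (hdecomp b)
    have hspec : ∀ b : Bs, ((b : A) - φ b • 1) ∈ Ccl := fun b =>
      Classical.choose_spec (hdecomp b)
    have huniq : ∀ (b : Bs) (z : ℂ), ((b : A) - z • 1) ∈ Ccl → φ b = z := by
      intro b z hz
      by_contra hne
      apply hone
      have h1 : (φ b - z) • (1 : A) ∈ Ccl := by
        have h2 := sub_mem hz (hspec b)
        have h3 : ((b : A) - z • 1) - ((b : A) - φ b • 1) = (φ b - z) • 1 := by
          rw [sub_smul]; abel
        rwa [h3] at h2
      have h4 := SMulMemClass.smul_mem (φ b - z)⁻¹ h1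
      rwa [smul_smul, inv_mul_cancel₀ (sub_ne_zero.mpr (Ne.symm (fun h => hne h.symm))),
        one_smul] at h4
    -- φ is a character
    have hφ1 : φ 1 = 1 := huniq 1 1 (by simpa using zero_mem Ccl)
    have hφadd : ∀ a b : Bs, φ (a + b) = φ a + φ b := by
      intro a b
      refine huniq _ _ ?_
      have := add_mem (hspec a) (hspec b)
      have h3 : (((a + b) : Bs) : A) - (φ a + φ b) • 1
          = ((a : A) - φ a • 1) + ((b : A) - φ b • 1) := by
        push_cast
        rw [add_smul]; abel
      rwa [h3]
    have hφsmul : ∀ (z : ℂ) (a : Bs), φ (z • a) = z * φ a := by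
      intro z a
      refine huniq _ _ ?_
      have := SMulMemClass.smul_mem z (hspec a)
      have h3 : (((z • a) : Bs) : A) - (z * φ a) • 1 = z • ((a : A) - φ a • 1) := by
        push_cast
        rw [smul_sub, smul_smul]
      rwa [h3]
    have hφmul : ∀ a b : Bs, φ (a * b) = φ a * φ b := by
      intro a b
      refine huniq _ _ ?_
      have hm := add_mem (add_mem (mul_mem (hspec a) (hspec b))
        (SMulMemClass.smul_mem (φ a) (hspec b))) (SMulMemClass.smul_mem (φ b) (hspec a))
      have h3 : (((a * b) : Bs) : A) - (φ a * φ b) • 1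
          = ((a : A) - φ a • 1) * ((b : A) - φ b • 1)
            + φ a • ((b : A) - φ b • 1) + φ b • ((a : A) - φ a • 1) := by
        push_cast
        simp only [mul_sub, sub_mul, smul_mul_assoc, mul_smul_comm, smul_smul,
          smul_sub, one_mul, mul_one]
        rw [mul_comm (φ b) (φ a)]
        abel
      rwa [h3]
    have hφstar : ∀ a : Bs, φ (star a) = star (φ a) := by
      intro a
      refine huniq _ _ ?_
      have := star_mem (s := Ccl) (hspec a)
      have h3 : (((star a) : Bs) : A) - star (φ a) • 1
          = star ((a : A) - φ a • 1) := by
        push_cast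
        rw [star_sub, star_smul, star_one, StarMemClass.coe_star]
      rwa [h3]
    have hφzero : φ 0 = 0 := huniq 0 0 (by simpa using zero_mem Ccl)
    -- the representation
    let H : Type u := ULift.{u} ℂ
    let π : Bs →⋆ₙₐ[ℂ] (H →L[ℂ] H) :=
      { toFun := fun b => φ b • (1 : H →L[ℂ] H)
        map_add' := fun a b => by
          show φ (a + b) • (1 : H →L[ℂ] H) = φ a • 1 + φ b • 1
          rw [hφadd]; module
        map_smul' := fun z a => by
          show φ (z • a) • (1 : H →L[ℂ] H) = z • (φ a • 1)
          rw [hφsmul, mul_smul]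
        map_zero' := by
          show φ 0 • (1 : H →L[ℂ] H) = 0
          rw [hφzero]; module
        map_mul' := fun a b => by
          show φ (a * b) • (1 : H →L[ℂ] H) = (φ a • 1) * (φ b • 1)
          rw [hφmul, smul_mul_smul_comm, one_mul]
        map_star' := fun a => by
          show φ (star a) • (1 : H →L[ℂ] H) = star (φ a • 1)
          rw [hφstar, star_smul, star_one] }
    have hπ1 : π 1 = (1 : H →L[ℂ] H) := by
      show φ 1 • (1 : H →L[ℂ] H) = 1
      rw [hφ1, one_smul]
    have hne : ∃ a : Bs, π a ≠ 0 := by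
      refine ⟨1, ?_⟩
      rw [hπ1]
      intro h
      have h2 := DFunLike.congr_fun h (ULift.up (1 : ℂ))
      simp only [ContinuousLinearMap.one_apply, ContinuousLinearMap.zero_apply] at h2
      have h3 : (1 : ℂ) = 0 := congrArg ULift.down h2
      exact one_ne_zero h3
    have hirr : ∀ S : Submodule ℂ H, IsClosed (S : Set H) →
        (∀ (a : Bs), ∀ v ∈ S, π a v ∈ S) → S = ⊥ ∨ S = ⊤ := by
      intro S _ _
      rcases eq_or_ne S ⊥ with h | h
      · exact Or.inl h
      refine Or.inr ?_
      rcases Submodule.exists_mem_ne_zero_of_ne_bot h with ⟨v, hvS, hv0⟩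
      have hvd : v.down ≠ 0 := by
        intro hd
        exact hv0 (ULift.ext v 0 hd)
      rw [eq_top_iff]
      intro w _
      have hw : w = (w.down * v.down⁻¹) • v := by
        apply ULift.ext
        show w.down = (w.down * v.down⁻¹) • v.down
        rw [smul_eq_mul, mul_assoc, inv_mul_cancel₀ hvd, mul_one]
      rw [hw]
      exact S.smul_mem _ hvS
    have hfin := hhom H inferInstance inferInstance inferInstance π hne hirr
    have h1 : Module.finrank ℂ H = 1 := by
      show Module.finrank ℂ (ULift.{u} ℂ) = 1
      rw [finrank_ulift, Module.finrank_self]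
    rw [h1] at hfin
    exact (Nat.lt_irrefl 1 (hfin ▸ hn))

end
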